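/- Let T be a finite tree and M a perfect matching of T. Then for every edge xy ∈ M, the third bi-power T_B^3 has a Hamiltonian path from x to y. Moreover this path can be chosen to cross every edge e ∈ E(T) \ M exactly twice with respect to T. -/

import Mathlib

/-- The `t`-th bi-power of a graph `G`: two vertices are adjacent iff their
distance in `G` is odd and at most `t`. -/
def SimpleGraph.biPower {V : Type*} (G : SimpleGraph V) (t : ℕ) : SimpleGraph V where
  Adj x y := Odd (G.dist x y) ∧ G.dist x y ≤ t
  symm := ⟨fun x y h => by show Odd (G.dist y x) ∧ G.dist y x ≤ t; rwa [SimpleGraph.dist_comm]⟩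
  loopless := ⟨fun x h => by simp [SimpleGraph.dist_self, Nat.odd_iff] at h⟩

namespace TreeBP


open SimpleGraph

variable {V : Type*} {T : SimpleGraph V}

/-- Every vertex is reachable from `u` or from `v` in `T` minus the edge `uv`. -/
lemma reach_or (hc : T.Connected) (u v : V) (w : V) :
    (T.deleteEdges {s(u, v)}).Reachable u w ∨ (T.deleteEdges {s(u, v)}).Reachable v w := by
  have aux : ∀ {c d : V} (p : T.Walk c d),
      ((T.deleteEdges {s(u, v)}).Reachable u c ∨ (T.deleteEdges {s(u, v)}).Reachable v c) →
      ((T.deleteEdges {s(u, v)}).Reachable u d ∨ (T.deleteEdges {s(u, v)}).Reachable v d) := by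
    intro c d p
    induction p with
    | nil => exact id
    | @cons c c' _ hcc' q ih =>
      intro hcase
      apply ih
      by_cases he : s(c, c') = s(u, v)
      · rw [Sym2.eq_iff] at he
        rcases he with ⟨rfl, rfl⟩ | ⟨rfl, rfl⟩
        · exact Or.inr (Reachable.refl _)
        · exact Or.inl (Reachable.refl _)
      · have hadj : (T.deleteEdges {s(u, v)}).Adj c c' := by
          simp only [deleteEdges_adj, Set.mem_singleton_iff]
          exact ⟨hcc', he⟩
        rcases hcase with h | h
        · exact Or.inl (h.trans hadj.reachable)
        · exact Or.inr (h.trans hadj.reachable)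
  obtain ⟨p⟩ := hc u w
  exact aux p (Or.inl (Reachable.refl _))

lemma not_reach_del (hT : T.IsTree) (huv : T.Adj u v) :
    ¬ (T.deleteEdges {s(u, v)}).Reachable u v := by
  have hb : T.IsBridge s(u, v) :=
    (isAcyclic_iff_forall_edge_isBridge.mp hT.IsAcyclic) huv
  exact isBridge_iff.mp hb

/-- A `T`-walk avoiding an edge gives reachability in the deleted graph. -/
lemma reach_of_avoid {c d : V} (p : T.Walk c d) (e : Sym2 V) (h : e ∉ p.edges) :
    (T.deleteEdges {e}).Reachable c d :=
  ⟨p.toDeleteEdges {e} (fun e' he' => by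
    rw [Set.mem_singleton_iff]; rintro rfl; exact h he')⟩

lemma reach_del_adj {c d : V} (hcd : T.Adj c d) (e : Sym2 V) (hne : s(c, d) ≠ e) :
    (T.deleteEdges {e}).Reachable c d := by
  have : (T.deleteEdges {e}).Adj c d := by
    simp only [deleteEdges_adj, Set.mem_singleton_iff]; exact ⟨hcd, hne⟩
  exact this.reachable

/-- Key distance lemma: if `w` is on the `u`-side of the edge `uv` of a tree,
then `dist w v = dist w u + 1`. -/
lemma dist_succ (hT : T.IsTree) (huv : T.Adj u v)
    (hw : (T.deleteEdges {s(u, v)}).Reachable u w) :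
    T.dist w v = T.dist w u + 1 := by
  classical
  have hc := hT.isConnected
  have hle : T.dist w v ≤ T.dist w u + 1 := by
    have := hc.dist_triangle (u := w) (v := u) (w := v)
    rwa [dist_eq_one_iff_adj.mpr huv] at this
  have hge : T.dist w u + 1 ≤ T.dist w v := by
    obtain ⟨p, hp⟩ := hc.exists_walk_length_eq_dist w v
    have he : s(u, v) ∈ p.edges := by
      by_contra he
      exact not_reach_del hT huv (hw.trans (reach_of_avoid p _ he))
    have hu : u ∈ p.support := p.fst_mem_support_of_mem_edges he
    have hsplit := congrArg Walk.length (p.take_spec hu)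
    rw [Walk.length_append] at hsplit
    have h1 : T.dist w u ≤ (p.takeUntil u hu).length := dist_le _
    have h2 : 1 ≤ (p.dropUntil u hu).length := by
      by_contra h2
      push_neg at h2
      interval_cases h : (p.dropUntil u hu).length
      · exact huv.ne (Walk.eq_of_length_eq_zero h)
    omega
  omega

/-- In a tree, the unique path between two vertices on the `u`-side of an edge `uv`
avoids the edge `uv` and stays on the `u`-side. -/
lemma side_closed (hT : T.IsTree) (huv : T.Adj u v) {c d : V}
    (hc : (T.deleteEdges {s(u, v)}).Reachable u c)
    (hd : (T.deleteEdges {s(u, v)}).Reachable u d)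
    (p : T.Walk c d) (hp : p.IsPath) :
    s(u, v) ∉ p.edges ∧ ∀ w ∈ p.support, (T.deleteEdges {s(u, v)}).Reachable u w := by
  classical
  obtain ⟨q⟩ := hc.symm.trans hd
  obtain ⟨q', hq'path⟩ := q.toPath
  have hq'le : ∀ e ∈ q'.edges, e ∈ T.edgeSet := fun e he => by
    have := q'.edges_subset_edgeSet he
    rw [edgeSet_deleteEdges] at this
    exact this.1
  have hq'avoid : ∀ e ∈ q'.edges, e ≠ s(u, v) := fun e he => by
    have := q'.edges_subset_edgeSet he
    rw [edgeSet_deleteEdges] at this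
    intro h; exact this.2 (by simp [h])
  set r := q'.transfer T hq'le with hr
  have hrpath : r.IsPath := hq'path.transfer _
  have hpr : p = r := by
    have h1 := hT.existsUnique_path c d
    obtain ⟨pp, -, hpp⟩ := h1
    rw [hpp p hp, hpp r hrpath]
  constructor
  · rw [hpr, hr, Walk.edges_transfer]
    intro h
    exact hq'avoid _ h rfl
  · intro w hw
    rw [hpr, hr, Walk.support_transfer] at hw
    have := q'.takeUntil w hw
    exact hc.trans ⟨this⟩

lemma exists_concat {G : SimpleGraph V} {c d : V} (p : G.Walk c d) (h : c ≠ d) :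
    ∃ (z : V) (q : G.Walk c z) (hzd : G.Adj z d), p = q.concat hzd := by
  have hnil : ¬ p.reverse.Nil := Walk.not_nil_of_ne (Ne.symm h)
  obtain ⟨z, hdz, q, hq⟩ := Walk.not_nil_iff.mp hnil
  refine ⟨z, q.reverse, hdz.symm, ?_⟩
  have := congrArg Walk.reverse hq
  rw [Walk.reverse_reverse] at this
  rw [this, Walk.reverse_cons]
  rfl



lemma biPower_adj {V : Type*} {T : SimpleGraph V} {c d : V} (h1 : Odd (T.dist c d))
    (h2 : T.dist c d ≤ 3) : (T.biPower 3).Adj c d := ⟨h1, h2⟩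

lemma len_filter_append {α : Type*} (f : α → Bool) (l₁ l₂ : List α) :
    ((l₁ ++ l₂).filter f).length = (l₁.filter f).length + (l₂.filter f).length := by
  simp [List.filter_append]

lemma len_filter_cons {α : Type*} (f : α → Bool) (a : α) (l : List α) :
    ((a :: l).filter f).length = (if f a then 1 else 0) + (l.filter f).length := by
  by_cases h : f a <;> simp [List.filter_cons, h, Nat.add_comm]

lemma len_filter_zero {α : Type*} (f : α → Bool) (l : List α)
    (h : ∀ a ∈ l, f a = false) : (l.filter f).length = 0 := by
  induction l with
  | nil => simp
  | cons a l ih =>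
    rw [len_filter_cons, h a (by simp), ih fun b hb => h b (by simp [hb])]
    simp

section Defs

variable {V : Type*} [DecidableEq V]

open Classical in
/-- The statement proved by induction. -/
def Concl (T : SimpleGraph V) (M : T.Subgraph) (S : Finset V) (x y : V) : Prop :=
  ∃ p : (T.biPower 3).Walk x y, p.IsPath ∧ (∀ w, w ∈ p.support ↔ w ∈ S) ∧
    (∀ u v : V, T.Adj u v → ¬ M.Adj u v →
      ((p.darts.filter (fun d => decide (¬ (T.deleteEdges {s(u, v)}).Reachable
          d.toProd.1 d.toProd.2))).length = if u ∈ S ∧ v ∈ S then 2 else 0)) ∧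
    (∀ d, p.darts.head? = some d →
      (d.toProd.2 = y ∨ T.Adj x d.toProd.2 ∨ T.dist y d.toProd.2 = 2)) ∧
    (∀ d, p.darts.getLast? = some d →
      (d.toProd.1 = x ∨ T.Adj y d.toProd.1 ∨ T.dist x d.toProd.1 = 2))

/-- `S` is closed under taking (unique) paths in `T`. -/
def Closed (T : SimpleGraph V) (S : Finset V) : Prop :=
  ∀ c d : V, c ∈ S → d ∈ S → ∀ p : T.Walk c d, p.IsPath → ∀ w ∈ p.support, w ∈ S

/-- `S` is closed under the matching `M`. -/
def MCl {T : SimpleGraph V} (M : T.Subgraph) (S : Finset V) : Prop :=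
  ∀ v ∈ S, ∀ w, M.Adj v w → w ∈ S

end Defs

section Step

open SimpleGraph

variable {V : Type*} [DecidableEq V]

theorem step (T : SimpleGraph V) (hT : T.IsTree) (M : T.Subgraph) (hM : M.IsPerfectMatching)
    (S : Finset V)
    (IH : ∀ S' : Finset V, S'.card < S.card → Closed T S' → MCl M S' →
      ∀ x y : V, x ∈ S' → y ∈ S' → M.Adj x y → Concl T M S' x y)
    (hclosed : Closed T S) (hmcl : MCl M S)
    (x y : V) (hx : x ∈ S) (hy : y ∈ S) (hxy : M.Adj x y)
    (a : V) (ha : a ∈ S) (hax : T.Adj x a) (hay : a ≠ y) :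
    Concl T M S x y := by
  classical
  have hM' := (Subgraph.isPerfectMatching_iff).mp hM
  have hxyT : T.Adj x y := M.adj_sub hxy
  have hxney : x ≠ y := hxyT.ne
  have haxne : x ≠ a := hax.ne
  have huniq : ∀ {c d d' : V}, M.Adj c d → M.Adj c d' → d = d' := by
    intro c d d' h1 h2
    obtain ⟨w, -, hw⟩ := hM' c
    rw [hw d h1, hw d' h2]
  obtain ⟨a', haa', -⟩ := hM' a
  have ha'x : a' ≠ x := by rintro rfl; exact hay (huniq haa'.symm hxy)
  have ha'y : a' ≠ y := by rintro rfl; exact haxne (huniq hxy.symm haa'.symm)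
  set Sa : Finset V := S.filter (fun v => ¬ (T.deleteEdges {s(x, a)}).Reachable x v)
    with hSa_def
  set Sx : Finset V := S.filter (fun v => (T.deleteEdges {s(x, a)}).Reachable x v)
    with hSx_def
  have hSa_mem : ∀ {v : V}, v ∈ Sa ↔ v ∈ S ∧ ¬ (T.deleteEdges {s(x, a)}).Reachable x v := by
    intro v; rw [hSa_def, Finset.mem_filter]
  have hSx_mem : ∀ {v : V}, v ∈ Sx ↔ v ∈ S ∧ (T.deleteEdges {s(x, a)}).Reachable x v := by
    intro v; rw [hSx_def, Finset.mem_filter]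
  have hbridge : ¬ (T.deleteEdges {s(x, a)}).Reachable x a := not_reach_del hT hax
  have hsideA : ∀ {v : V}, v ∈ Sa → (T.deleteEdges {s(x, a)}).Reachable a v := fun {v} hv =>
    (reach_or hT.isConnected x a v).resolve_left (hSa_mem.mp hv).2
  have hreachSa : ∀ {v : V}, v ∈ S → (T.deleteEdges {s(x, a)}).Reachable a v → v ∈ Sa := by
    intro v hvS hr
    exact hSa_mem.mpr ⟨hvS, fun hr2 => hbridge (hr2.trans hr.symm)⟩
  have hxSx : x ∈ Sx := hSx_mem.mpr ⟨hx, Reachable.refl x⟩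
  have hne_xy_xa : s(x, y) ≠ s(x, a) := by
    rw [Ne, Sym2.eq_iff]; rintro (⟨-, h⟩ | ⟨h, -⟩); exacts [hay h.symm, haxne h]
  have hySx : y ∈ Sx := hSx_mem.mpr ⟨hy, reach_del_adj hxyT _ hne_xy_xa⟩
  have haSa : a ∈ Sa := hSa_mem.mpr ⟨ha, hbridge⟩
  have ha'Sa : a' ∈ Sa := by
    refine hreachSa (hmcl a ha a' haa') (reach_del_adj (M.adj_sub haa') _ ?_)
    rw [Ne, Sym2.eq_iff]; rintro (⟨h, -⟩ | ⟨-, h⟩); exacts [haxne h.symm, ha'x h]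
  have hpath : ∀ c d : V, ∃ p : T.Walk c d, p.IsPath := by
    intro c d
    obtain ⟨w⟩ := hT.isConnected c d
    exact ⟨w.toPath.1, w.toPath.2⟩
  have pathSx : ∀ c d : V, c ∈ Sx → d ∈ Sx → ∃ p : T.Walk c d,
      p.IsPath ∧ (∀ w ∈ p.support, w ∈ Sx) ∧ s(x, a) ∉ p.edges := by
    intro c d hc hd
    obtain ⟨p, hp⟩ := hpath c d
    have hside := side_closed hT hax (hSx_mem.mp hc).2 (hSx_mem.mp hd).2 p hp
    exact ⟨p, hp, fun w hw => hSx_mem.mpr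
      ⟨hclosed c d (hSx_mem.mp hc).1 (hSx_mem.mp hd).1 p hp w hw, hside.2 w hw⟩, hside.1⟩
  have pathSa : ∀ c d : V, c ∈ Sa → d ∈ Sa → ∃ p : T.Walk c d,
      p.IsPath ∧ (∀ w ∈ p.support, w ∈ Sa) ∧ s(x, a) ∉ p.edges := by
    intro c d hc hd
    obtain ⟨p, hp⟩ := hpath c d
    have h1 : (T.deleteEdges {s(a, x)}).Reachable a c := by
      rw [show s(a, x) = s(x, a) from Sym2.eq_swap]; exact hsideA hc
    have h2 : (T.deleteEdges {s(a, x)}).Reachable a d := by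
      rw [show s(a, x) = s(x, a) from Sym2.eq_swap]; exact hsideA hd
    have hside := side_closed hT hax.symm h1 h2 p hp
    refine ⟨p, hp, fun w hw => ?_, ?_⟩
    · refine hreachSa (hclosed c d (hSa_mem.mp hc).1 (hSa_mem.mp hd).1 p hp w hw) ?_
      have h3 := hside.2 w hw
      rwa [show s(a, x) = s(x, a) from Sym2.eq_swap] at h3
    · rw [show s(x, a) = s(a, x) from Sym2.eq_swap]; exact hside.1
  have hSa_sub : Sa ⊆ S := by rw [hSa_def]; exact Finset.filter_subset _ _
  have hSx_sub : Sx ⊆ S := by rw [hSx_def]; exact Finset.filter_subset _ _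
  have hdisj : ∀ {v : V}, v ∈ Sx → v ∈ Sa → False := fun {v} hv1 hv2 =>
    (hSa_mem.mp hv2).2 (hSx_mem.mp hv1).2
  have hsplitS : ∀ {v : V}, v ∈ S → v ∈ Sx ∨ v ∈ Sa := by
    intro v hv
    by_cases h : (T.deleteEdges {s(x, a)}).Reachable x v
    exacts [Or.inl (hSx_mem.mpr ⟨hv, h⟩), Or.inr (hSa_mem.mpr ⟨hv, h⟩)]
  have hcardSa : Sa.card < S.card :=
    Finset.card_lt_card ((Finset.ssubset_iff_of_subset hSa_sub).mpr
      ⟨x, hx, fun h => hdisj hxSx h⟩)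
  have hcardSx : Sx.card < S.card :=
    Finset.card_lt_card ((Finset.ssubset_iff_of_subset hSx_sub).mpr
      ⟨a, ha, fun h => hdisj h haSa⟩)
  have hclosedSa : Closed T Sa := by
    intro c d hc hd p hp w hw
    obtain ⟨p', hp'path, hp'supp, -⟩ := pathSa c d hc hd
    obtain ⟨pp, -, hpp⟩ := hT.existsUnique_path c d
    have hpq : p = p' := (hpp p hp).trans (hpp p' hp'path).symm
    exact hp'supp w (hpq ▸ hw)
  have hclosedSx : Closed T Sx := by
    intro c d hc hd p hp w hw
    obtain ⟨p', hp'path, hp'supp, -⟩ := pathSx c d hc hd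
    obtain ⟨pp, -, hpp⟩ := hT.existsUnique_path c d
    have hpq : p = p' := (hpp p hp).trans (hpp p' hp'path).symm
    exact hp'supp w (hpq ▸ hw)
  have hmclSa : MCl M Sa := by
    intro v hv w hvw
    have hwS : w ∈ S := hmcl v (hSa_sub hv) w hvw
    refine hreachSa hwS ((hsideA hv).trans (reach_del_adj (M.adj_sub hvw) _ ?_))
    rw [Ne, Sym2.eq_iff]
    rintro (⟨h1, h2⟩ | ⟨h1, h2⟩)
    · rw [h1] at hv; exact (hSa_mem.mp hv).2 (Reachable.refl _)
    · subst h1; subst h2; exact ha'x (huniq haa' hvw)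
  have hmclSx : MCl M Sx := by
    intro v hv w hvw
    have hwS : w ∈ S := hmcl v (hSx_sub hv) w hvw
    refine hSx_mem.mpr ⟨hwS, (hSx_mem.mp hv).2.trans (reach_del_adj (M.adj_sub hvw) _ ?_)⟩
    rw [Ne, Sym2.eq_iff]
    rintro (⟨h1, h2⟩ | ⟨h1, h2⟩)
    · subst h1; subst h2; exact hay (huniq hvw hxy)
    · subst h1; exact hdisj hv haSa
  obtain ⟨Q, hQpath, hQsupp, hQcc, hQi1, hQi2⟩ :=
    IH Sa hcardSa hclosedSa hmclSa a a' haSa ha'Sa haa'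
  obtain ⟨P, hPpath, hPsupp, hPcc, hPi1, hPi2⟩ :=
    IH Sx hcardSx hclosedSx hmclSx x y hxSx hySx hxy
  obtain ⟨z, q, hzy, rfl⟩ := exists_concat P hxney
  have hPsupp_eq : (q.concat hzy).support = q.support ++ [y] := by
    rw [Walk.support_concat]
  have hPdarts_eq : (q.concat hzy).darts = q.darts ++ [⟨(z, y), hzy⟩] := by
    rw [Walk.darts_concat, List.concat_eq_append]
  have hqsubSx : ∀ w ∈ q.support, w ∈ Sx := fun w hw =>
    (hPsupp w).mp (by rw [hPsupp_eq]; exact List.mem_append_left _ hw)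
  have hzSx : z ∈ Sx := hqsubSx z q.end_mem_support
  have hPnodup := hPpath.support_nodup
  rw [hPsupp_eq, List.nodup_append] at hPnodup
  have hqnodup : q.support.Nodup := hPnodup.1
  have hynq : y ∉ q.support := fun hmem => hPnodup.2.2 y hmem y (List.mem_singleton_self y) rfl
  have Hz : z = x ∨ T.Adj y z ∨ T.dist x z = 2 := by
    refine hPi2 ⟨(z, y), hzy⟩ ?_
    rw [hPdarts_eq]
    exact List.getLast?_concat
  have hdista'a : T.dist a' a = 1 := dist_eq_one_iff_adj.mpr (M.adj_sub haa').symm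
  have hRaa' : (T.deleteEdges {s(a, x)}).Reachable a a' := by
    refine reach_del_adj (M.adj_sub haa') _ ?_
    rw [Ne, Sym2.eq_iff]; rintro (⟨-, h⟩ | ⟨h, -⟩); exacts [ha'x h, haxne h.symm]
  have hdista'x : T.dist a' x = 2 := by
    have h := dist_succ hT hax.symm hRaa'
    rw [h, hdista'a]
  have hRxa' : (T.deleteEdges {s(x, y)}).Reachable x a' := by
    refine reach_of_avoid (Walk.cons hax (Walk.cons (M.adj_sub haa') Walk.nil)) _ ?_
    simp only [Walk.edges_cons, Walk.edges_nil, List.mem_cons, List.not_mem_nil, or_false]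
    rintro (h | h)
    · exact hne_xy_xa h
    · rw [Sym2.eq_iff] at h
      rcases h with ⟨h, -⟩ | ⟨h, -⟩; exacts [haxne h, ha'x h.symm]
  have hdista'y : T.dist a' y = 3 := by
    have h := dist_succ hT hxyT hRxa'
    rw [h, hdista'x]
  have ha'ybp : (T.biPower 3).Adj a' y :=
    biPower_adj (by rw [hdista'y]; exact ⟨1, rfl⟩) (by rw [hdista'y])
  have hreach_del_z : (T.deleteEdges {s(x, a)}).Reachable x z := (hSx_mem.mp hzSx).2
  have hzabp : (T.biPower 3).Adj z a := by
    by_cases hzx : z = x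
    · subst hzx
      have h1 : T.dist z a = 1 := dist_eq_one_iff_adj.mpr hax
      exact biPower_adj (by rw [h1]; exact ⟨0, rfl⟩) (by rw [h1]; omega)
    · have hdza : T.dist z a = T.dist z x + 1 := dist_succ hT hax hreach_del_z
      have hdzx : T.dist z x = 2 := by
        rcases Hz with h | h | h
        · exact absurd h hzx
        · have h1 : (T.deleteEdges {s(y, x)}).Reachable y z := by
            refine reach_del_adj h _ ?_
            rw [Ne, Sym2.eq_iff]; rintro (⟨-, h2⟩ | ⟨h2, -⟩); exacts [hzx h2, hxney h2.symm]
          have h2 := dist_succ hT hxyT.symm h1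
          rw [h2, dist_eq_one_iff_adj.mpr h.symm]
        · rw [SimpleGraph.dist_comm]; exact h
      exact biPower_adj (by rw [hdza, hdzx]; exact ⟨1, rfl⟩) (by rw [hdza, hdzx])
  have hdistxa' : T.dist x a' = 2 := by rw [SimpleGraph.dist_comm]; exact hdista'x
  have hQsuppSa : ∀ w ∈ Q.support, w ∈ Sa := fun w hw => (hQsupp w).mp hw
  have hWsupp : (q.append (Walk.cons hzabp (Q.concat ha'ybp))).support
      = q.support ++ (Q.support ++ [y]) := by
    rw [Walk.support_append, Walk.support_cons, List.tail_cons, Walk.support_concat]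
  have hWdarts : (q.append (Walk.cons hzabp (Q.concat ha'ybp))).darts
      = q.darts ++ ((⟨(z, a), hzabp⟩ : (T.biPower 3).Dart) ::
        (Q.darts ++ [(⟨(a', y), ha'ybp⟩ : (T.biPower 3).Dart)])) := by
    rw [Walk.darts_append, Walk.darts_cons, Walk.darts_concat, List.concat_eq_append]
  refine ⟨q.append (Walk.cons hzabp (Q.concat ha'ybp)), ?_, ?_, ?_, ?_, ?_⟩
  · rw [Walk.isPath_def, hWsupp]
    refine List.Nodup.append hqnodup (List.Nodup.append hQpath.support_nodup
      (List.nodup_singleton y) ?_) ?_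
    · intro w hw1 hw2
      rw [List.mem_singleton] at hw2; subst hw2
      exact hdisj hySx (hQsuppSa _ hw1)
    · intro w hw1 hw2
      rcases List.mem_append.mp hw2 with h | h
      · exact hdisj (hqsubSx w hw1) (hQsuppSa w h)
      · rw [List.mem_singleton] at h; subst h; exact hynq hw1
  · intro w
    rw [hWsupp]
    simp only [List.mem_append, List.mem_singleton]
    constructor
    · rintro (h | h | rfl)
      exacts [hSx_sub (hqsubSx w h), hSa_sub (hQsuppSa w h), hy]
    · intro hw
      rcases hsplitS hw with h | h
      · have h2 : w ∈ (q.concat hzy).support := (hPsupp w).mpr h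
        rw [hPsupp_eq] at h2
        rcases List.mem_append.mp h2 with h' | h'
        · exact Or.inl h'
        · exact Or.inr (Or.inr (List.mem_singleton.mp h'))
      · exact Or.inr (Or.inl ((hQsupp w).mpr h))
  · intro u v hTuv hMuv
    have hind : ∀ (c d : V) (h : (T.biPower 3).Adj c d),
        (if (fun d0 : (T.biPower 3).Dart =>
            decide (¬ (T.deleteEdges {s(u, v)}).Reachable d0.toProd.1 d0.toProd.2))
            (⟨(c, d), h⟩ : (T.biPower 3).Dart) then (1 : ℕ) else 0)
        = if (T.deleteEdges {s(u, v)}).Reachable c d then 0 else 1 := by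
      intro c d h
      by_cases hr : (T.deleteEdges {s(u, v)}).Reachable c d <;> simp [hr]
    have hMne : ∀ (c d : V), M.Adj c d → s(c, d) ≠ s(u, v) := by
      intro c d hcd h
      rw [Sym2.eq_iff] at h
      rcases h with ⟨h1, h2⟩ | ⟨h1, h2⟩
      · subst h1; subst h2; exact hMuv hcd
      · subst h1; subst h2; exact hMuv hcd.symm
    have hRza : ¬ s(u, v) = s(x, a) → (u ∉ Sx ∨ v ∉ Sx) →
        (T.deleteEdges {s(u, v)}).Reachable z a := by
      intro hne hnot
      obtain ⟨p0, -, hp0supp, -⟩ := pathSx z x hzSx hxSx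
      refine reach_of_avoid (p0.concat hax) _ ?_
      rw [Walk.edges_concat, List.concat_eq_append]
      intro hmem
      rcases List.mem_append.mp hmem with h | h
      · rcases hnot with h' | h'
        · exact h' (hp0supp u (p0.fst_mem_support_of_mem_edges h))
        · exact h' (hp0supp v (p0.snd_mem_support_of_mem_edges h))
      · rw [List.mem_singleton] at h; exact hne h
    have hRay : s(x, a) ≠ s(u, v) →
        (T.deleteEdges {s(u, v)}).Reachable a y := by
      intro hne
      refine reach_of_avoid (Walk.cons hax.symm (Walk.cons hxyT Walk.nil)) _ ?_
      simp only [Walk.edges_cons, Walk.edges_nil, List.mem_cons, List.not_mem_nil, or_false]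
      rintro (h | h)
      · exact hne (by rw [Sym2.eq_swap]; exact h.symm)
      · exact hMne x y hxy h.symm
    have hRa'y : s(x, a) ≠ s(u, v) →
        (T.deleteEdges {s(u, v)}).Reachable a' y := by
      intro hne
      refine reach_of_avoid (Walk.cons (M.adj_sub haa').symm
        (Walk.cons hax.symm (Walk.cons hxyT Walk.nil))) _ ?_
      simp only [Walk.edges_cons, Walk.edges_nil, List.mem_cons, List.not_mem_nil, or_false]
      rintro (h | h | h)
      · exact hMne a' a haa'.symm h.symm
      · exact hne (by rw [Sym2.eq_swap]; exact h.symm)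
      · exact hMne x y hxy h.symm
    have hP := hPcc u v hTuv hMuv
    rw [hPdarts_eq, len_filter_append, len_filter_cons, List.filter_nil, List.length_nil,
      hind z y hzy] at hP
    have hQ := hQcc u v hTuv hMuv
    rw [hWdarts, len_filter_append, len_filter_cons, len_filter_append, len_filter_cons,
      List.filter_nil, List.length_nil, hind z a hzabp, hind a' y ha'ybp]
    by_cases hcase : s(u, v) = s(x, a)
    · have hUV : u ∈ S ∧ v ∈ S := by
        have h := hcase
        rw [Sym2.eq_iff] at h
        rcases h with ⟨h1, h2⟩ | ⟨h1, h2⟩ <;> subst h1 <;> subst h2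
        exacts [⟨hx, ha⟩, ⟨ha, hx⟩]
      rw [if_pos hUV]
      have h1 : (List.filter (fun d0 : (T.biPower 3).Dart =>
          decide (¬ (T.deleteEdges {s(u, v)}).Reachable d0.toProd.1 d0.toProd.2))
          q.darts).length = 0 := by
        refine len_filter_zero _ _ ?_
        intro d hd
        have hc1 : d.toProd.1 ∈ Sx := hqsubSx _ (Walk.dart_fst_mem_support_of_mem_darts _ hd)
        have hc2 : d.toProd.2 ∈ Sx := hqsubSx _ (Walk.dart_snd_mem_support_of_mem_darts _ hd)
        have hr : (T.deleteEdges {s(u, v)}).Reachable d.toProd.1 d.toProd.2 := by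
          rw [hcase]
          exact (hSx_mem.mp hc1).2.symm.trans (hSx_mem.mp hc2).2
        exact decide_eq_false (not_not_intro hr)
      have h2 : (List.filter (fun d0 : (T.biPower 3).Dart =>
          decide (¬ (T.deleteEdges {s(u, v)}).Reachable d0.toProd.1 d0.toProd.2))
          Q.darts).length = 0 := by
        refine len_filter_zero _ _ ?_
        intro d hd
        have hc1 : d.toProd.1 ∈ Sa := hQsuppSa _ (Walk.dart_fst_mem_support_of_mem_darts _ hd)
        have hc2 : d.toProd.2 ∈ Sa := hQsuppSa _ (Walk.dart_snd_mem_support_of_mem_darts _ hd)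
        have hr : (T.deleteEdges {s(u, v)}).Reachable d.toProd.1 d.toProd.2 := by
          rw [hcase]
          exact (hsideA hc1).symm.trans (hsideA hc2)
        exact decide_eq_false (not_not_intro hr)
      have h3 : ¬ (T.deleteEdges {s(u, v)}).Reachable z a := by
        rw [hcase]
        intro hr
        exact hbridge (hreach_del_z.trans hr)
      have h4 : ¬ (T.deleteEdges {s(u, v)}).Reachable a' y := by
        rw [hcase]
        intro hr
        exact (hSa_mem.mp ha'Sa).2 ((hSx_mem.mp hySx).2.trans hr.symm)
      rw [h1, h2, if_neg h3, if_neg h4]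
    · have hcase' : s(x, a) ≠ s(u, v) := Ne.symm hcase
      have hra'y := hRa'y hcase'
      by_cases hUV : u ∈ S ∧ v ∈ S
      · rw [if_pos hUV]
        by_cases huSx : u ∈ Sx
        · have hvSx : v ∈ Sx := hSx_mem.mpr
            ⟨hUV.2, (hSx_mem.mp huSx).2.trans (reach_del_adj hTuv _ hcase)⟩
          rw [if_pos (show u ∈ Sx ∧ v ∈ Sx from ⟨huSx, hvSx⟩)] at hP
          rw [if_neg (show ¬ (u ∈ Sa ∧ v ∈ Sa) from fun h => hdisj huSx h.1)] at hQ
          rw [hQ, if_pos hra'y]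
          have hray := hRay hcase'
          by_cases hrzy : (T.deleteEdges {s(u, v)}).Reachable z y
          · rw [if_pos hrzy] at hP
            rw [if_pos (hrzy.trans hray.symm)]
            omega
          · rw [if_neg hrzy] at hP
            rw [if_neg (show ¬ (T.deleteEdges {s(u, v)}).Reachable z a from
              fun h => hrzy (h.trans hray))]
            omega
        · have huSa : u ∈ Sa := (hsplitS hUV.1).resolve_left huSx
          have hvSa : v ∈ Sa := by
            rcases hsplitS hUV.2 with h | h
            · exfalso
              refine huSx (hSx_mem.mpr ⟨hUV.1, (hSx_mem.mp h).2.trans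
                (reach_del_adj hTuv.symm _ ?_)⟩)
              intro h2
              exact hcase (by rw [Sym2.eq_swap]; exact h2)
            · exact h
          rw [if_pos (show u ∈ Sa ∧ v ∈ Sa from ⟨huSa, hvSa⟩)] at hQ
          rw [if_neg (show ¬ (u ∈ Sx ∧ v ∈ Sx) from fun h => huSx h.1)] at hP
          have hrza := hRza hcase (Or.inl huSx)
          rw [hQ, if_pos hrza, if_pos hra'y]
          omega
      · rw [if_neg hUV]
        rw [if_neg (show ¬ (u ∈ Sx ∧ v ∈ Sx) from fun h => hUV ⟨hSx_sub h.1, hSx_sub h.2⟩)] at hP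
        rw [if_neg (show ¬ (u ∈ Sa ∧ v ∈ Sa) from fun h => hUV ⟨hSa_sub h.1, hSa_sub h.2⟩)] at hQ
        have hnotSx : u ∉ Sx ∨ v ∉ Sx := by
          rcases not_and_or.mp hUV with h | h
          exacts [Or.inl (fun hh => h (hSx_sub hh)), Or.inr (fun hh => h (hSx_sub hh))]
        have hrza := hRza hcase hnotSx
        rw [hQ, if_pos hrza, if_pos hra'y]
        omega
  · intro d hd
    rw [hWdarts] at hd
    rcases hq : q.darts with - | ⟨d0, l⟩
    · rw [hq, List.nil_append, List.head?_cons, Option.some.injEq] at hd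
      subst hd
      exact Or.inr (Or.inl hax)
    · rw [hq, List.cons_append, List.head?_cons, Option.some.injEq] at hd
      subst hd
      refine hPi1 d0 ?_
      rw [hPdarts_eq, hq, List.cons_append, List.head?_cons]
  · intro d hd
    rw [hWdarts] at hd
    have heq : q.darts ++ ((⟨(z, a), hzabp⟩ : (T.biPower 3).Dart) ::
        (Q.darts ++ [(⟨(a', y), ha'ybp⟩ : (T.biPower 3).Dart)])) =
        (q.darts ++ ((⟨(z, a), hzabp⟩ : (T.biPower 3).Dart) :: Q.darts)) ++
          [(⟨(a', y), ha'ybp⟩ : (T.biPower 3).Dart)] := by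
      simp
    rw [heq, List.getLast?_concat, Option.some.injEq] at hd
    subst hd
    exact Or.inr (Or.inr hdistxa')


end Step

lemma len_filter_map {α β : Type*} (g : α → β) (f : β → Bool) (l : List α) :
    ((l.map g).filter f).length = (l.filter (fun a => f (g a))).length := by
  induction l with
  | nil => simp
  | cons a l ih => by_cases h : f (g a) <;> simp [List.filter_cons, h, ih]

section Main

open SimpleGraph

variable {V : Type*} [DecidableEq V]

theorem main (T : SimpleGraph V) (hT : T.IsTree) (M : T.Subgraph) (hM : M.IsPerfectMatching) :
    ∀ (n : ℕ) (S : Finset V), S.card ≤ n → Closed T S → MCl M S →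
    ∀ x y : V, x ∈ S → y ∈ S → M.Adj x y → Concl T M S x y := by
  intro n
  induction n with
  | zero =>
    intro S hcard _ _ x y hx _ _
    rw [Nat.le_zero, Finset.card_eq_zero] at hcard
    subst hcard
    exact absurd hx (Finset.notMem_empty x)
  | succ n IHn =>
    intro S hcard hclosed hmcl x y hx hy hxy
    classical
    have hxyT : T.Adj x y := M.adj_sub hxy
    have hxney : x ≠ y := hxyT.ne
    have IH : ∀ S' : Finset V, S'.card < S.card → Closed T S' → MCl M S' →
        ∀ x y : V, x ∈ S' → y ∈ S' → M.Adj x y → Concl T M S' x y := by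
      intro S' h
      exact IHn S' (by omega)
    by_cases hsmall : ∀ v ∈ S, v = x ∨ v = y
    · have hbp : (T.biPower 3).Adj x y := biPower_adj
        (by rw [dist_eq_one_iff_adj.mpr hxyT]; exact ⟨0, rfl⟩)
        (by rw [dist_eq_one_iff_adj.mpr hxyT]; omega)
      refine ⟨Walk.cons hbp Walk.nil, ?_, ?_, ?_, ?_, ?_⟩
      · rw [Walk.isPath_def]
        simp [hxney]
      · intro w
        rw [Walk.support_cons, Walk.support_nil]
        simp only [List.mem_cons, List.not_mem_nil, or_false, List.mem_singleton]
        constructor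
        · rintro (rfl | rfl); exacts [hx, hy]
        · intro hw
          rcases hsmall w hw with rfl | rfl
          exacts [Or.inl rfl, Or.inr rfl]
      · intro u v hTuv hMuv
        have hcond : ¬ (u ∈ S ∧ v ∈ S) := by
          rintro ⟨hu, hv⟩
          rcases hsmall u hu with rfl | rfl <;> rcases hsmall v hv with rfl | rfl
          · exact hTuv.ne rfl
          · exact hMuv hxy
          · exact hMuv hxy.symm
          · exact hTuv.ne rfl
        rw [if_neg hcond]
        refine len_filter_zero _ _ ?_
        intro d hd
        rw [Walk.darts_cons, Walk.darts_nil, List.mem_singleton] at hd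
        subst hd
        have hr : (T.deleteEdges {s(u, v)}).Reachable x y := by
          refine reach_del_adj hxyT _ ?_
          intro h
          rw [Sym2.eq_iff] at h
          rcases h with ⟨h1, h2⟩ | ⟨h1, h2⟩
          · subst h1; subst h2; exact hMuv hxy
          · subst h1; subst h2; exact hMuv hxy.symm
        exact decide_eq_false (not_not_intro hr)
      · intro d hd
        rw [Walk.darts_cons, Walk.darts_nil, List.head?_cons, Option.some.injEq] at hd
        subst hd
        exact Or.inl rfl
      · intro d hd
        rw [Walk.darts_cons, Walk.darts_nil, List.getLast?_singleton, Option.some.injEq] at hd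
        subst hd
        exact Or.inl rfl
    · push_neg at hsmall
      obtain ⟨v0, hv0S, hv0x, hv0y⟩ := hsmall
      obtain ⟨w0⟩ := hT.isConnected v0 x
      have hppath : w0.toPath.1.IsPath := w0.toPath.2
      obtain ⟨z1, q1, hz1x, hpeq⟩ := exists_concat w0.toPath.1 hv0x
      have hsupp1 : ∀ w ∈ w0.toPath.1.support, w ∈ S := hclosed v0 x hv0S hx _ hppath
      have hq1sub : ∀ w ∈ q1.support, w ∈ w0.toPath.1.support := by
        intro w hw
        rw [hpeq, Walk.support_concat]
        exact List.mem_append_left _ hw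
      have hz1S : z1 ∈ S := hsupp1 z1 (hq1sub z1 q1.end_mem_support)
      have hnd := hppath.support_nodup
      rw [hpeq, Walk.support_concat, List.nodup_append] at hnd
      have hxq1 : x ∉ q1.support := fun h => hnd.2.2 x h x (List.mem_singleton_self x) rfl
      by_cases hz1y : z1 = y
      · subst hz1y
        obtain ⟨z2, q2, hz2y, hq1eq⟩ := exists_concat q1 hv0y
        have hq2sub : ∀ w ∈ q2.support, w ∈ q1.support := by
          intro w hw
          rw [hq1eq, Walk.support_concat]
          exact List.mem_append_left _ hw
        have hz2S : z2 ∈ S := hsupp1 z2 (hq1sub z2 (hq2sub z2 q2.end_mem_support))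
        have hz2x : z2 ≠ x := fun h => hxq1 (h ▸ hq2sub z2 q2.end_mem_support)
        have hnd1 := hnd.1
        rw [hq1eq, Walk.support_concat, List.nodup_append] at hnd1
        have hz2ny : z2 ≠ z1 := by
          intro h
          exact hnd1.2.2 z2 q2.end_mem_support z1 (List.mem_singleton_self z1) h
        obtain ⟨p0, hp0path, hp0supp, hp0cc, hp0i1, hp0i2⟩ :=
          step T hT M hM S IH hclosed hmcl z1 x hy hx hxy.symm z2 hz2S hz2y.symm hz2x
        refine ⟨p0.reverse, hp0path.reverse, ?_, ?_, ?_, ?_⟩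
        · intro w
          rw [Walk.support_reverse, List.mem_reverse]
          exact hp0supp w
        · intro u v hTuv hMuv
          have h := hp0cc u v hTuv hMuv
          have hpt : ∀ d ∈ p0.darts,
              ((fun d0 : (T.biPower 3).Dart =>
                decide (¬ (T.deleteEdges {s(u, v)}).Reachable d0.toProd.1 d0.toProd.2))
                (SimpleGraph.Dart.symm d))
              = (fun d0 : (T.biPower 3).Dart =>
                decide (¬ (T.deleteEdges {s(u, v)}).Reachable d0.toProd.1 d0.toProd.2)) d := by
            intro d _
            exact decide_eq_decide.mpr
              (not_congr ⟨fun hh => hh.symm, fun hh => hh.symm⟩)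
          rw [Walk.darts_reverse, List.filter_reverse, List.length_reverse, len_filter_map,
            List.filter_congr hpt, h]
        · intro d hd
          rw [Walk.darts_reverse, List.head?_reverse, ← List.head?_reverse,
            ← List.map_reverse, List.head?_map, List.head?_reverse,
            Option.map_eq_some_iff] at hd
          obtain ⟨d1, hd1, rfl⟩ := hd
          exact hp0i2 d1 hd1
        · intro d hd
          rw [Walk.darts_reverse, List.getLast?_reverse, List.head?_map,
            Option.map_eq_some_iff] at hd
          obtain ⟨d1, hd1, rfl⟩ := hd
          exact hp0i1 d1 hd1
      · exact step T hT M hM S IH hclosed hmcl x y hx hy hxy z1 hz1S hz1x.symm hz1y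

end Main

end TreeBP

open Classical in
/-- Let `T` be a finite tree and `M` a perfect matching of `T`.  Then for
every edge `xy ∈ M`, the third bi-power `T_B^3` has a Hamiltonian path from
`x` to `y` that crosses every edge `uv ∈ E(T) \\ M` exactly twice with respect
to `T` (i.e. it uses exactly two edges joining the two components of
`T - uv`). -/
theorem tree_biPower_three_hamiltonian_path_crossing {V : Type*} [Fintype V] [DecidableEq V]
    (T : SimpleGraph V) (hT : T.IsTree) (M : T.Subgraph) (hM : M.IsPerfectMatching)
    (x y : V) (hxy : M.Adj x y) :
    ∃ p : (T.biPower 3).Walk x y, p.IsHamiltonian ∧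
      ∀ u v : V, T.Adj u v → ¬ M.Adj u v →
        (p.darts.filter (fun d => decide (¬ (T.deleteEdges {s(u, v)}).Reachable d.toProd.1 d.toProd.2))).length = 2 := by
  classical
  obtain ⟨p, hpath, hsupp, hcc, -, -⟩ :=
    TreeBP.main T hT M hM Finset.univ.card Finset.univ le_rfl
      (fun c d _ _ p _ w _ => Finset.mem_univ w)
      (fun v _ w _ => Finset.mem_univ w)
      x y (Finset.mem_univ x) (Finset.mem_univ y) hxy
  refine ⟨p, ?_, ?_⟩
  · exact (hpath.isHamiltonian_iff).mpr fun w => (hsupp w).mpr (Finset.mem_univ w)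
  · intro u v hTuv hMuv
    have h2 := hcc u v hTuv hMuv
    rw [if_pos ⟨Finset.mem_univ u, Finset.mem_univ v⟩] at h2
    refine Eq.trans ?_ h2
    congr 1
    apply List.filter_congr
    intro d _
    exact decide_eq_decide.mpr Iff.rfl
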